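/- arXiv:2401.01263 — 3 statements merged into one kernel-verified Lean document; each statement's English description precedes it below -/
import Mathlib

section
/- Let A_1, ..., A_K be pairwise coprime nonzero polynomials over a field, with deg(A_i) = n_i. Suppose Q_1, ..., Q_K are polynomials with deg(Q_i) ≤ n_i + m_i where m_i ≤ n_i for all i and m_i < n_i for all but at most one index i. If the polynomial B(p) = Σ_{i=1}^K Q_i(p) · ∏_{j ≠ i} A_j(p)^2 is identically zero, then Q_i = 0 for all i. -/
open Polynomial Finset

/-- If `A_1, …, A_K` are pairwise coprime nonzero polynomials over a field with
`deg A_i = n_i`, and `Q_1, …, Q_K` satisfy `deg Q_i ≤ n_i + m_i` with `m_i ≤ n_i` and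
`m_i < n_i` for all but at most one index, then
`∑ i, Q_i · ∏_{j ≠ i} A_j² = 0` forces all `Q_i = 0`. -/
theorem additive_numerators_vanish {F : Type*} [Field F] {K : ℕ}
    (A Q : Fin K → Polynomial F) (n m : Fin K → ℕ)
    (hA0 : ∀ i, A i ≠ 0)
    (hdn : ∀ i, (A i).natDegree = n i)
    (hcop : ∀ i j, i ≠ j → IsCoprime (A i) (A j))
    (hm : ∀ i, m i ≤ n i)
    (hexc : ∀ i j, m i = n i → m j = n j → i = j)
    (hdQ : ∀ i, (Q i).natDegree ≤ n i + m i)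
    (hsum : ∑ i, Q i * ∏ j ∈ univ.erase i, (A j) ^ 2 = 0) :
    ∀ i, Q i = 0 := by
  have hdvd : ∀ i, (A i) ^ 2 ∣ Q i := by
    intro i
    have heq : Q i * ∏ j ∈ univ.erase i, (A j) ^ 2
        = -∑ j ∈ univ.erase i, Q j * ∏ k ∈ univ.erase j, (A k) ^ 2 := by
      rw [← Finset.add_sum_erase _ _ (mem_univ i)] at hsum
      linear_combination hsum
    have h1 : (A i) ^ 2 ∣ Q i * ∏ j ∈ univ.erase i, (A j) ^ 2 := by
      rw [heq]
      apply dvd_neg.mpr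
      apply Finset.dvd_sum
      intro j hj
      have hij : i ∈ univ.erase j := by
        simp only [mem_erase, mem_univ, and_true] at hj ⊢
        exact fun h => hj h.symm
      exact Dvd.dvd.mul_left
        (Finset.dvd_prod_of_mem (fun k => (A k) ^ 2) hij) _
    have hcop2 : IsCoprime ((A i) ^ 2) (∏ j ∈ univ.erase i, (A j) ^ 2) := by
      rw [Finset.prod_pow]
      apply IsCoprime.pow
      apply IsCoprime.prod_right
      intro j hj
      exact hcop i j (fun h => (mem_erase.mp hj).1 h.symm)
    exact hcop2.dvd_of_dvd_mul_right h1
  have key : ∀ i, m i < n i → Q i = 0 := by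
    intro i hlt
    by_contra hQ
    have := Polynomial.natDegree_le_of_dvd (hdvd i) hQ
    rw [Polynomial.natDegree_pow, hdn i] at this
    have := hdQ i
    omega
  intro i
  by_cases h : m i = n i
  · have hz : ∀ j ∈ (univ : Finset (Fin K)), j ≠ i →
        Q j * ∏ k ∈ univ.erase j, (A k) ^ 2 = 0 := by
      intro j _ hj
      rw [key j (lt_of_le_of_ne (hm j) (fun e => hj (hexc j i e h))), zero_mul]
    rw [Finset.sum_eq_single i hz (fun h => absurd (mem_univ i) h)] at hsum
    rcases mul_eq_zero.mp hsum with h' | h'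
    · exact h'
    · exact absurd h' (Finset.prod_ne_zero_iff.mpr
        (fun k _ => pow_ne_zero 2 (hA0 k)))
  · exact key i (lt_of_le_of_ne (hm i) h)
end

section
/- Let A₁, ..., A_K be pairwise coprime polynomials over ℝ, each of degree n_i ≥ 1, and consider the family of rational functions { p^j / (A_i(p)²·∏_{l≠i} A_l(p)²) : 1 ≤ i ≤ K, 0 ≤ j ≤ n_i + m_i } where m_i ≤ n_i for all i with strict inequality for all but at most one i. Then these rational functions, viewed as elements of the field ℝ(p), are linearly independent over ℝ. -/
open Polynomial
open Finset

/-- For pairwise coprime real polynomials `A_i` of degree `n_i ≥ 1`, the rational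
functions `p^j / A_i(p)²` for `1 ≤ i ≤ K`, `0 ≤ j ≤ n_i + m_i` (with `m_i ≤ n_i`, strict for
all but at most one `i`) are linearly independent over `ℝ` in `ℝ(p)`. -/
theorem rational_family_linearIndependent {K : ℕ} (n m : Fin K → ℕ)
    (A : Fin K → Polynomial ℝ)
    (hdA : ∀ i, (A i).natDegree = n i) (hn : ∀ i, 1 ≤ n i)
    (hm : ∀ i, m i ≤ n i)
    (hexc : ∀ i j, m i = n i → m j = n j → i = j)
    (hpair : ∀ i j, i ≠ j → IsCoprime (A i) (A j)) :
    LinearIndependent ℝ (fun p : (i : Fin K) × Fin (n i + m i + 1) =>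
      (RatFunc.X : RatFunc ℝ) ^ (p.2 : ℕ)
        / (algebraMap (Polynomial ℝ) (RatFunc ℝ) (A p.1)) ^ 2) := by
  classical
  rw [Fintype.linearIndependent_iff]
  intro g hg
  set F := algebraMap (Polynomial ℝ) (RatFunc ℝ) with hF
  have hA0 : ∀ i, A i ≠ 0 := by
    intro i h
    have h1 := hdA i
    rw [h, natDegree_zero] at h1
    have := hn i; omega
  have hFA : ∀ i, F (A i) ^ 2 ≠ 0 := fun i =>
    pow_ne_zero _ (RatFunc.algebraMap_ne_zero (hA0 i))
  set B : (i : Fin K) → Polynomial ℝ :=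
    fun i => ∑ j : Fin (n i + m i + 1), monomial (j : ℕ) (g ⟨i, j⟩) with hB
  have hBdeg : ∀ i, (B i).natDegree ≤ n i + m i := by
    intro i
    refine natDegree_sum_le_of_forall_le _ _ ?_
    intro j _
    exact (natDegree_monomial_le _).trans (Nat.lt_succ_iff.mp j.isLt)
  have key : ∑ i, F (B i) / F (A i) ^ 2 = 0 := by
    rw [← hg, ← Finset.univ_sigma_univ, Finset.sum_sigma]
    refine Finset.sum_congr rfl fun i _ => ?_
    rw [hB]
    simp only [map_sum, Finset.sum_div]
    refine Finset.sum_congr rfl fun j _ => ?_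
    rw [← C_mul_X_pow_eq_monomial, map_mul, map_pow, RatFunc.algebraMap_X,
      Algebra.smul_def, IsScalarTower.algebraMap_apply ℝ (Polynomial ℝ) (RatFunc ℝ),
      mul_div_assoc]
    simp [Polynomial.algebraMap_eq, hF]
  have hS : (∑ i, B i * ∏ l ∈ univ.erase i, (A l) ^ 2) = 0 := by
    apply RatFunc.algebraMap_injective ℝ |>.eq_iff.mp
    rw [map_zero, map_sum]
    have h1 : ∀ i ∈ (univ : Finset (Fin K)), F (B i * ∏ l ∈ univ.erase i, (A l) ^ 2)
        = (F (B i) / F (A i) ^ 2) * F (∏ l, (A l) ^ 2) := by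
      intro i _
      rw [← Finset.mul_prod_erase univ (fun l => (A l) ^ 2) (mem_univ i),
        map_mul, map_mul, map_pow]
      rw [div_mul_eq_mul_div, mul_comm (F (A i) ^ 2), mul_div_assoc,
        mul_div_cancel_right₀ _ (hFA i)]
    rw [Finset.sum_congr rfl h1, ← Finset.sum_mul, key, zero_mul]
  have hdvd : ∀ i, (A i) ^ 2 ∣ B i := by
    intro i
    have hco : IsCoprime ((A i) ^ 2) (∏ l ∈ univ.erase i, (A l) ^ 2) := by
      refine IsCoprime.prod_right fun l hl => ?_
      exact (hpair i l (fun h => (mem_erase.mp hl).1 h.symm)).pow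
    refine hco.dvd_of_dvd_mul_right ?_
    have h2 : B i * ∏ l ∈ univ.erase i, (A l) ^ 2
        = -∑ k ∈ univ.erase i, B k * ∏ l ∈ univ.erase k, (A l) ^ 2 := by
      have := Finset.add_sum_erase univ
        (fun k => B k * ∏ l ∈ univ.erase k, (A l) ^ 2) (mem_univ i)
      rw [hS] at this
      simpa using eq_neg_of_add_eq_zero_left this
    rw [h2]
    refine dvd_neg.mpr (Finset.dvd_sum fun k hk => ?_)
    refine Dvd.dvd.mul_left ?_ _
    exact Finset.dvd_prod_of_mem (fun l => (A l) ^ 2)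
      (mem_erase.mpr ⟨(mem_erase.mp hk).1.symm, mem_univ i⟩)
  have hBlt : ∀ i, m i < n i → B i = 0 := by
    intro i hlt
    refine Polynomial.eq_zero_of_dvd_of_natDegree_lt (hdvd i) ?_
    rw [natDegree_pow, hdA i]
    exact lt_of_le_of_lt (hBdeg i) (by omega)
  have hBall : ∀ i, B i = 0 := by
    intro i
    rcases lt_or_eq_of_le (hm i) with hlt | heq
    · exact hBlt i hlt
    · have hothers : ∀ k, k ≠ i → B k = 0 := by
        intro k hk
        refine hBlt k (lt_of_le_of_ne (hm k) fun hkeq => hk (hexc k i hkeq heq))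
      have : B i * ∏ l ∈ univ.erase i, (A l) ^ 2 = 0 := by
        rw [← hS, ← Finset.add_sum_erase univ _ (mem_univ i)]
        rw [Finset.sum_eq_zero fun k hk => by
          rw [hothers k (mem_erase.mp hk).1, zero_mul], add_zero]
      rcases mul_eq_zero.mp this with h | h
      · exact h
      · exact absurd h (Finset.prod_ne_zero_iff.mpr fun l _ => pow_ne_zero _ (hA0 l))
  rintro ⟨i, j⟩
  have hc : (B i).coeff j = g ⟨i, j⟩ := by
    rw [hB, finset_sum_coeff]
    rw [Finset.sum_eq_single j]
    · simp [coeff_monomial]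
    · intro j' _ hj'
      rw [coeff_monomial, if_neg (fun h => hj' (Fin.ext h))]
    · intro h; exact absurd (mem_univ j) h
  rw [← hc, hBall i, coeff_zero]
end

section
/- Let φ̂(k) ∈ ℝᵐ and let Υ(k) ∈ ℝᴷ, φ(k) ∈ ℝᵐ for k = 1,...,N, and suppose the matrix R = (1/N)Σ_k φ̂(k)φ(k)ᵀ is nonsingular. Suppose B̄ ∈ ℝ^{m×K} satisfies the fixed-point equation B̄ = R⁻¹ · (1/N)Σ_k φ̂(k)Υ(k)ᵀ, and suppose there exists a block-diagonal matrix B̃ (with the i-th diagonal block a column vector θ̄_i) such that Υ(k)ᵀ - φ(k)ᵀB̃ = ε(k)·[1,...,1] for some scalars ε(k) with (1/N)Σ_k φ̂(k)ε(k) = 0. Then B̄ = B̃; in particular B̄ is block-diagonal. -/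
open Matrix Finset

/-- If the normal matrix `R = (1/N)∑ φ̂(k)φ(k)ᵀ` is nonsingular, `B̄` satisfies the
fixed-point equation `B̄ = R⁻¹ (1/N)∑ φ̂(k)Υ(k)ᵀ`, and there is a block-diagonal `B̃` with
`Υ(k)ᵀ - φ(k)ᵀB̃ = ε(k)·[1,…,1]` for scalars `ε(k)` with `(1/N)∑ ε(k)φ̂(k) = 0`, then
`B̄ = B̃`; in particular `B̄` is block-diagonal. -/
theorem converged_iterate_blockDiagonal {N m K : ℕ} (hN : 0 < N)
    (φhat φ : Fin N → Fin m → ℝ) (Υ : Fin N → Fin K → ℝ)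
    (R : Matrix (Fin m) (Fin m) ℝ)
    (hR : R = (N : ℝ)⁻¹ • ∑ k, Matrix.vecMulVec (φhat k) (φ k))
    (hRinv : IsUnit R.det)
    (Bbar Btil : Matrix (Fin m) (Fin K) ℝ)
    (hBbar : Bbar = R⁻¹ * ((N : ℝ)⁻¹ • ∑ k, Matrix.vecMulVec (φhat k) (Υ k)))
    (blk : Fin m → Fin K)
    (hblk : ∀ r c, blk r ≠ c → Btil r c = 0)
    (ε : Fin N → ℝ)
    (hε : ∀ k c, Υ k c - (φ k) ⬝ᵥ (fun r => Btil r c) = ε k)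
    (hopt : (N : ℝ)⁻¹ • ∑ k, ε k • φhat k = 0) :
    Bbar = Btil := by
  have key : ((N : ℝ)⁻¹ • ∑ k, Matrix.vecMulVec (φhat k) (Υ k)) = R * Btil := by
    ext r c
    have h0 : ∑ k, φhat k r * ε k = 0 := by
      have h1 := congrFun hopt r
      have hNne : ((N : ℝ)⁻¹) ≠ 0 := by positivity
      simp only [Pi.smul_apply, Finset.sum_apply, smul_eq_mul, Pi.zero_apply] at h1
      have h2 : ∑ k, ε k * φhat k r = 0 := by
        rcases mul_eq_zero.mp h1 with h | h
        · exact absurd h hNne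
        · exact h
      calc ∑ k, φhat k r * ε k = ∑ k, ε k * φhat k r := by
            exact Finset.sum_congr rfl fun k _ => mul_comm _ _
        _ = 0 := h2
    have hΥ : ∀ k, Υ k c = (∑ j, φ k j * Btil j c) + ε k := by
      intro k
      have := hε k c
      simp only [dotProduct] at this
      linarith
    simp only [hR, Matrix.smul_apply, Matrix.sum_apply, Matrix.vecMulVec_apply,
      Matrix.mul_apply, smul_eq_mul]
    rw [Finset.sum_congr rfl fun k _ => by rw [hΥ k]]
    have : ∑ k, φhat k r * ((∑ j, φ k j * Btil j c) + ε k)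
        = ∑ k, ∑ j, φhat k r * (φ k j * Btil j c) := by
      rw [Finset.sum_congr rfl fun k _ => by rw [mul_add, Finset.mul_sum]]
      rw [Finset.sum_add_distrib, h0, add_zero]
    rw [this, Finset.sum_comm, Finset.mul_sum, Finset.sum_congr rfl]
    intro j _
    simp only [Finset.mul_sum, Finset.sum_mul]
    exact Finset.sum_congr rfl fun k _ => by ring
  rw [hBbar, key, ← Matrix.mul_assoc, Matrix.nonsing_inv_mul _ hRinv, Matrix.one_mul]
end
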